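/- For any prime p ≥ 5, the harmonic number H_{⌊p/2⌋} satisfies H_{⌊p/2⌋} ≡ -2*q_p(2) (mod p), where the congruence is between p-adic integers (or rationals with denominators coprime to p) and q_p(2) = (2^{p-1}-1)/p. -/

import Mathlib

open Finset

-- alternating harmonic identity in ℚ
lemma alt_harmonic (m : ℕ) :
    ∑ k ∈ Icc 1 (2*m), (-1:ℚ)^(k-1) / k
      = (∑ k ∈ Icc 1 (2*m), (1:ℚ)/k) - ∑ k ∈ Icc 1 m, (1:ℚ)/k := by
  induction m with
  | zero => simp
  | succ m ih =>
    have h2 : 2*(m+1) = (2*m+1)+1 := by ring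
    rw [h2, Finset.sum_Icc_succ_top (by omega),
        show 2*m+1 = (2*m)+1 by rfl, Finset.sum_Icc_succ_top (by omega), ih,
        Finset.sum_Icc_succ_top (a := 1) (b := 2*m+1) (f := fun k => (1:ℚ)/k) (by omega),
        Finset.sum_Icc_succ_top (a := 1) (b := 2*m) (f := fun k => (1:ℚ)/k) (by omega),
        Finset.sum_Icc_succ_top (a := 1) (b := m) (f := fun k => (1:ℚ)/k) (by omega)]
    have e1 : ((-1:ℚ))^((2*m+1)-1) = 1 := by
      simpa using Even.neg_one_pow (⟨m, by ring⟩ : Even (2*m))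
    have e2 : ((-1:ℚ))^((2*m+1+1)-1) = -1 := by
      simpa [pow_succ] using congrArg (· * (-1:ℚ)) e1
    rw [e1, e2]
    have hm1 : ((2*m+1 : ℕ) : ℚ) ≠ 0 := by positivity
    have hm2 : ((2*m+1+1 : ℕ) : ℚ) ≠ 0 := by positivity
    have hm3 : ((m+1 : ℕ) : ℚ) ≠ 0 := by positivity
    push_cast at hm1 hm2 hm3 ⊢
    field_simp
    ring

lemma sum_inv_zero (p : ℕ) [hF : Fact p.Prime] (hp2 : 2 < p) :
    ∑ k ∈ Icc 1 (p-1), ((k : ZMod p))⁻¹ = 0 := by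
  have hp := hF.out
  have hmem : ∀ k ∈ Icc 1 (p-1), (k : ZMod p) ≠ 0 := by
    intro k hk
    rw [Ne, ZMod.natCast_eq_zero_iff]
    simp only [mem_Icc] at hk
    intro hd
    have := Nat.le_of_dvd (by omega) hd
    omega
  have key : ∑ k ∈ Icc 1 (p-1), ((k : ZMod p))⁻¹ = ∑ k ∈ Icc 1 (p-1), (k : ZMod p) := by
    refine Finset.sum_nbij' (i := fun k => ((k : ZMod p)⁻¹).val)
      (j := fun k => ((k : ZMod p)⁻¹).val) ?_ ?_ ?_ ?_ ?_
    · intro k hk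
      have h1 : ((k : ZMod p))⁻¹ ≠ 0 := inv_ne_zero (hmem k hk)
      have h2 : ((k : ZMod p)⁻¹).val ≠ 0 := by
        simpa [ZMod.val_eq_zero] using h1
      have h3 := ZMod.val_lt ((k : ZMod p))⁻¹
      simp only [mem_Icc]; omega
    · intro k hk
      have h1 : ((k : ZMod p))⁻¹ ≠ 0 := inv_ne_zero (hmem k hk)
      have h2 : ((k : ZMod p)⁻¹).val ≠ 0 := by
        simpa [ZMod.val_eq_zero] using h1
      have h3 := ZMod.val_lt ((k : ZMod p))⁻¹
      simp only [mem_Icc]; omega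
    · intro k hk
      simp only [mem_Icc] at hk
      show ((((((k:ℕ) : ZMod p))⁻¹.val : ℕ) : ZMod p))⁻¹.val = k
      rw [ZMod.natCast_rightInverse _, inv_inv, ZMod.val_natCast_of_lt (by omega)]
    · intro k hk
      simp only [mem_Icc] at hk
      show ((((((k:ℕ) : ZMod p))⁻¹.val : ℕ) : ZMod p))⁻¹.val = k
      rw [ZMod.natCast_rightInverse _, inv_inv, ZMod.val_natCast_of_lt (by omega)]
    · intro k hk
      show ((k:ℕ) : ZMod p)⁻¹ = ((((k:ℕ) : ZMod p))⁻¹.val : ZMod p)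
      rw [ZMod.natCast_rightInverse _]
  rw [key, ← Nat.cast_sum]
  have hodd : p % 2 = 1 := Nat.odd_iff.mp (hp.odd_of_ne_two (by omega))
  have hsum : ∑ k ∈ Icc 1 (p-1), k = (p-1)/2 * p := by
    have hins : range p = insert 0 (Icc 1 (p-1)) := by
      ext x; simp only [mem_range, mem_insert, mem_Icc]; omega
    have h := Finset.sum_range_id_mul_two p
    rw [hins, Finset.sum_insert (by simp)] at h
    set m := (p-1)/2 with hm
    have h2 : p - 1 = 2 * m := by omega
    have h3 : (∑ k ∈ Icc 1 (p-1), k) * 2 = (m * p) * 2 := by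
      rw [← Nat.zero_add (∑ k ∈ Icc 1 (p-1), k), h, h2]; ring
    omega
  rw [hsum]
  push_cast [ZMod.natCast_self]
  ring

lemma choose_neg_one (p : ℕ) [hF : Fact p.Prime] :
    ∀ k, k ≤ p - 1 → ((Nat.choose (p-1) k : ZMod p)) = (-1)^k := by
  have hp := hF.out
  intro k
  induction k with
  | zero => simp
  | succ k ih =>
    intro hk
    have h1 : (Nat.choose p (k+1) : ZMod p) = 0 := by
      rw [ZMod.natCast_eq_zero_iff]
      exact hp.dvd_choose_self (by omega) (by omega)
    have h2 : Nat.choose (p-1) k + Nat.choose (p-1) (k+1) = Nat.choose p (k+1) := by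
      rw [show p = (p-1)+1 by omega]
      simp [Nat.choose_succ_succ' ]
    have h3 : (Nat.choose (p-1) k : ZMod p) + (Nat.choose (p-1) (k+1) : ZMod p) = 0 := by
      rw [← Nat.cast_add, h2, h1]
    rw [ih (by omega)] at h3
    have : (Nat.choose (p-1) (k+1) : ZMod p) = -(-1)^k := by linear_combination h3
    rw [this, pow_succ]
    ring

lemma not_dvd_den_sum (p : ℕ) (hp : p.Prime) (s : Finset ℕ) (f : ℕ → ℚ)
    (h : ∀ i ∈ s, ¬ (p ∣ (f i).den)) : ¬ p ∣ (∑ i ∈ s, f i).den := by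
  induction s using Finset.cons_induction with
  | empty => simpa using hp.one_lt.ne'
  | cons a s ha ih =>
    rw [Finset.sum_cons]
    intro hd
    have hdvd := (Rat.add_den_dvd (f a) (∑ i ∈ s, f i))
    have := hd.trans hdvd
    rcases (Nat.Prime.dvd_mul hp).mp this with h1 | h1
    · exact h a (Finset.mem_cons_self a s) h1
    · exact ih (fun i hi => h i (Finset.mem_cons_of_mem hi)) h1

lemma cast_sum_of_den (p : ℕ) [hF : Fact p.Prime] (s : Finset ℕ) (f : ℕ → ℚ)
    (h : ∀ i ∈ s, ¬ (p ∣ (f i).den)) :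
    ((∑ i ∈ s, f i : ℚ) : ZMod p) = ∑ i ∈ s, ((f i : ℚ) : ZMod p) := by
  have hp := hF.out
  induction s using Finset.cons_induction with
  | empty => simp
  | cons a s ha ih =>
    rw [Finset.sum_cons, Finset.sum_cons,
      ← ih (fun i hi => h i (Finset.mem_cons_of_mem hi)),
      ← Rat.cast_add_of_ne_zero]
    · rw [Ne, ZMod.natCast_eq_zero_iff]
      exact h a (Finset.mem_cons_self a s)
    · rw [Ne, ZMod.natCast_eq_zero_iff]
      exact not_dvd_den_sum p hp s f (fun i hi => h i (Finset.mem_cons_of_mem hi))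

theorem harmonic_half_cong (p : ℕ) (hp : p.Prime) (hp5 : 5 ≤ p) :
    (p : ℤ) ∣ ((∑ i ∈ Finset.Icc 1 (p / 2), (1 : ℚ) / i)
      - (-2 * ((2 ^ (p - 1) - 1 : ℚ) / p))).num := by
  haveI : Fact p.Prime := ⟨hp⟩
  have hodd : p % 2 = 1 := Nat.odd_iff.mp (hp.odd_of_ne_two (by omega))
  have hm : p - 1 = 2 * (p / 2) := by omega
  -- Fermat: p ∣ 2^(p-1) - 1
  have h2ne : (2 : ZMod p) ≠ 0 := by
    have : ((2:ℕ) : ZMod p) ≠ 0 := by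
      rw [Ne, ZMod.natCast_eq_zero_iff]
      intro hd; have := Nat.le_of_dvd (by norm_num) hd; omega
    simpa using this
  have hfermz : (((2:ℤ)^(p-1) - 1 : ℤ) : ZMod p) = 0 := by
    push_cast
    rw [ZMod.pow_card_sub_one_eq_one h2ne]
    ring
  obtain ⟨q, hq⟩ : (p:ℤ) ∣ (2:ℤ)^(p-1) - 1 :=
    (ZMod.intCast_zmod_eq_zero_iff_dvd _ p).mp hfermz
  have hpQ : (p:ℚ) ≠ 0 := Nat.cast_ne_zero.mpr (by omega)
  have hr : (-2 * ((2 ^ (p - 1) - 1 : ℚ) / p)) = ((-2*q : ℤ) : ℚ) := by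
    have hqQ : ((2:ℚ)^(p-1) - 1) = (p:ℚ) * (q:ℚ) := by exact_mod_cast congrArg (fun z : ℤ => (z:ℚ)) hq
    rw [hqQ]
    field_simp
    push_cast; ring
  -- denominators of the harmonic summands
  have hden1 : ∀ i ∈ Icc 1 (p/2), ¬ (p ∣ ((1:ℚ)/i).den) := by
    intro i hi
    simp only [mem_Icc] at hi
    intro hd
    have hdi : (((1:ℚ)/i).den : ℤ) ∣ (i:ℤ) := by
      have he : (1:ℚ)/(i:ℚ) = Rat.divInt (1:ℤ) (i:ℤ) := by
        rw [Rat.divInt_eq_div]; push_cast; ring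
      rw [he]
      exact Rat.den_dvd 1 (i:ℤ)
    have hdi' : ((1:ℚ)/i).den ∣ i := by exact_mod_cast hdi
    have := Nat.le_of_dvd (by omega) (hd.trans hdi')
    omega
  set H : ℚ := ∑ i ∈ Finset.Icc 1 (p / 2), (1 : ℚ) / i with hH
  set x : ℚ := H - (-2 * ((2 ^ (p - 1) - 1 : ℚ) / p)) with hx
  have hdenH : ¬ p ∣ H.den := not_dvd_den_sum p hp _ _ hden1
  have hdenx : ¬ p ∣ x.den := by
    rw [hx, hr, sub_eq_add_neg]
    intro hd
    have h1 := hd.trans (Rat.add_den_dvd _ _)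
    rw [Rat.neg_den, Rat.den_intCast, mul_one] at h1
    exact hdenH h1
  -- binomial quotients
  set c : ℕ → ℕ := fun k => Nat.choose p k / p with hc
  have hck : ∀ k, 1 ≤ k → k ≤ p - 1 → p * c k = Nat.choose p k := by
    intro k h1 h2
    exact Nat.mul_div_cancel' (hp.dvd_choose_self (by omega) (by omega))
  have hsumchoose : ∑ k ∈ Icc 1 (p-1), Nat.choose p k = 2^p - 2 := by
    have h := Nat.sum_range_choose p
    rw [Finset.sum_range_succ] at h
    have hins : range p = insert 0 (Icc 1 (p-1)) := by
      ext y; simp only [mem_range, mem_insert, mem_Icc]; omega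
    rw [hins, Finset.sum_insert (by simp)] at h
    simp only [Nat.choose_self, Nat.choose_zero_right] at h
    omega
  have hsumc : (∑ k ∈ Icc 1 (p-1), (c k : ℤ)) = 2*q := by
    have hpZ : (p:ℤ) ≠ 0 := by exact_mod_cast hp.pos.ne'
    apply mul_left_cancel₀ hpZ
    have hstep : ∀ k ∈ Icc 1 (p-1), (p:ℤ) * (c k : ℤ) = (Nat.choose p k : ℤ) := by
      intro k hk
      simp only [mem_Icc] at hk
      exact_mod_cast congrArg (Nat.cast : ℕ → ℤ) (hck k hk.1 hk.2)
    rw [Finset.mul_sum, Finset.sum_congr rfl hstep, ← Nat.cast_sum, hsumchoose]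
    have h2p : (2:ℕ) ≤ 2^p := by
      calc (2:ℕ) = 2^1 := by norm_num
      _ ≤ 2^p := Nat.pow_le_pow_right (by norm_num) (by omega)
    rw [Nat.cast_sub h2p]
    push_cast
    have he : (2:ℤ)^p = 2 * 2^(p-1) := by
      conv_lhs => rw [show p = (p-1)+1 by omega]
      rw [pow_succ]; ring
    rw [he]
    linear_combination (2:ℤ) * hq
  have hkne : ∀ k, 1 ≤ k → k ≤ p - 1 → ((k:ℕ) : ZMod p) ≠ 0 := by
    intro k h1 h2
    rw [Ne, ZMod.natCast_eq_zero_iff]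
    intro hd; have := Nat.le_of_dvd (by omega) hd; omega
  have hterm : ∀ k ∈ Icc 1 (p-1), ((c k : ℕ) : ZMod p) = (-1)^(k-1) * ((k : ZMod p))⁻¹ := by
    intro k hk; simp only [mem_Icc] at hk
    have h1 : p * Nat.choose (p-1) (k-1) = Nat.choose p k * k := by
      have h := Nat.add_one_mul_choose_eq (p-1) (k-1)
      rwa [show p-1+1 = p by omega,
          show k-1+1 = k by omega] at h
    have h2 : p * Nat.choose (p-1) (k-1) = p * (k * c k) := by
      rw [h1, ← hck k hk.1 hk.2]; ring
    have h3 : Nat.choose (p-1) (k-1) = k * c k := Nat.eq_of_mul_eq_mul_left hp.pos h2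
    have h4 : ((k : ZMod p)) * ((c k : ℕ) : ZMod p) = (-1)^(k-1) := by
      rw [← Nat.cast_mul, ← h3, choose_neg_one p (k-1) (by omega)]
    have hkz := hkne k hk.1 hk.2
    calc ((c k : ℕ) : ZMod p) = (k:ZMod p)⁻¹ * ((k:ZMod p) * ((c k : ℕ) : ZMod p)) := by
          rw [← mul_assoc, inv_mul_cancel₀ hkz, one_mul]
      _ = (k:ZMod p)⁻¹ * (-1)^(k-1) := by rw [h4]
      _ = (-1)^(k-1) * (k:ZMod p)⁻¹ := mul_comm _ _
  have hA : ∑ k ∈ Icc 1 (p-1), ((-1 : ZMod p))^(k-1) * ((k:ZMod p))⁻¹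
      = ((2*q : ℤ) : ZMod p) := by
    rw [← Finset.sum_congr rfl hterm]
    have h := congrArg (fun z : ℤ => (z : ZMod p)) hsumc
    push_cast at h
    rw [h]; simp
  -- casting the alternating harmonic identity
  have hdivden : ∀ (a : ℤ) (k : ℕ), ((a : ℚ)/(k : ℚ)).den ∣ k := by
    intro a k
    have he : (a:ℚ)/(k:ℚ) = Rat.divInt a (k:ℤ) := by rw [Rat.divInt_eq_div]; norm_cast
    rw [he]
    exact_mod_cast Rat.den_dvd a (k:ℤ)
  have hdenalt : ∀ k ∈ Icc 1 (p-1), ¬ (p ∣ ((-1:ℚ)^(k-1)/k).den) := by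
    intro k hk; simp only [mem_Icc] at hk
    intro hd
    have he : ((-1:ℚ))^(k-1) = ((((-1:ℤ)^(k-1) : ℤ)) : ℚ) := by push_cast; ring
    rw [he] at hd
    have hpk : p ∣ k := hd.trans (hdivden _ k)
    have := Nat.le_of_dvd (show 0 < k by omega) hpk
    omega
  have hdenharm : ∀ k ∈ Icc 1 (p-1), ¬ (p ∣ ((1:ℚ)/k).den) := by
    intro k hk; simp only [mem_Icc] at hk
    intro hd
    have he : (1:ℚ) = ((1:ℤ) : ℚ) := by norm_num
    rw [he] at hd
    have hpk : p ∣ k := hd.trans (hdivden 1 k)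
    have := Nat.le_of_dvd (show 0 < k by omega) hpk
    omega
  have hcast_term : ∀ k ∈ Icc 1 (p-1),
      (((-1:ℚ)^(k-1)/k : ℚ) : ZMod p) = ((-1 : ZMod p))^(k-1) * ((k:ZMod p))⁻¹ := by
    intro k hk; simp only [mem_Icc] at hk
    have he : ((-1:ℚ))^(k-1)/k = Rat.divInt ((-1:ℤ)^(k-1)) (k:ℤ) := by
      rw [Rat.divInt_eq_div]; push_cast; ring
    rw [he, Rat.cast_divInt_of_ne_zero]
    · push_cast
      rw [div_eq_mul_inv]
    · have := hkne k hk.1 hk.2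
      exact_mod_cast this
  have hcast_inv : ∀ k ∈ Icc 1 (p-1), (((1:ℚ)/k : ℚ) : ZMod p) = ((k:ZMod p))⁻¹ := by
    intro k hk; simp only [mem_Icc] at hk
    have he : (1:ℚ)/(k:ℚ) = Rat.divInt (1:ℤ) (k:ℤ) := by
      rw [Rat.divInt_eq_div]; push_cast; ring
    rw [he, Rat.cast_divInt_of_ne_zero]
    · push_cast
      rw [div_eq_mul_inv, one_mul]
    · have := hkne k hk.1 hk.2
      exact_mod_cast this
  have hcast_S : ∀ i ∈ Icc 1 (p/2), (((1:ℚ)/i : ℚ) : ZMod p) = ((i:ZMod p))⁻¹ := by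
    intro i hi; simp only [mem_Icc] at hi
    exact hcast_inv i (by simp only [mem_Icc]; omega)
  -- cast the ℚ identity
  have halt := alt_harmonic (p/2)
  rw [← hm, ← hH] at halt
  have hcast_eq := congrArg (fun r : ℚ => (r : ZMod p)) halt
  rw [cast_sum_of_den p _ _ hdenalt,
      Rat.cast_sub_of_ne_zero (by
        rw [Ne, ZMod.natCast_eq_zero_iff]
        exact not_dvd_den_sum p hp _ _ hdenharm)
      (by rw [Ne, ZMod.natCast_eq_zero_iff]; exact hdenH),
      cast_sum_of_den p _ _ hdenharm,
      cast_sum_of_den p _ _ hden1,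
      Finset.sum_congr rfl hcast_term,
      Finset.sum_congr rfl hcast_inv,
      Finset.sum_congr rfl hcast_S,
      hA, sum_inv_zero p (by omega), zero_sub] at hcast_eq
  -- hcast_eq : ((2*q:ℤ) : ZMod p) = -(H : ZMod p)
  have hHcast : ((H : ℚ) : ZMod p) = ((-2*q : ℤ) : ZMod p) := by
    have hneg := congrArg (fun z : ZMod p => -z) hcast_eq
    simp only [neg_neg] at hneg
    rw [hH, cast_sum_of_den p _ _ hden1, Finset.sum_congr rfl hcast_S, ← hneg]
    push_cast
    ring
  have hxcast : ((x : ℚ) : ZMod p) = 0 := by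
    rw [hx, hr, Rat.cast_sub_of_ne_zero
        (by rw [Ne, ZMod.natCast_eq_zero_iff]; exact hdenH)
        (by rw [Rat.den_intCast, Nat.cast_one]; exact one_ne_zero),
      Rat.cast_intCast, hHcast, sub_self]
  rw [Rat.cast_def] at hxcast
  have hdne : ((x.den : ℕ) : ZMod p) ≠ 0 := by
    rw [Ne, ZMod.natCast_eq_zero_iff]; exact hdenx
  rw [div_eq_zero_iff] at hxcast
  rcases hxcast with h | h
  · exact (ZMod.intCast_zmod_eq_zero_iff_dvd _ p).mp h
  · exact absurd h hdne
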